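/- The Cartan invariant satisfies the cocycle relation: for four points p, q, r, s on the null cone (pairwise non-proportional), 𝔸(p,q,r) − 𝔸(p,q,s) + 𝔸(p,r,s) − 𝔸(q,r,s) = 0 (modulo 2π). -/

import Mathlib

open Matrix Complex

noncomputable section

abbrev C3 := Fin 3 → ℂ

/-- Hermitian form ⟨X,Y⟩ = Yᴴ J X. -/
def herm (J : Matrix (Fin 3) (Fin 3) ℂ) (X Y : C3) : ℂ :=
  star Y ⬝ᵥ J.mulVec X

/-- Box product a ⊠ b = conj(J⁻¹ (a × b)). -/
def box (J : Matrix (Fin 3) (Fin 3) ℂ) (a b : C3) : C3 :=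
  star (J⁻¹.mulVec (crossProduct a b))

def J3 : Matrix (Fin 3) (Fin 3) ℂ := !![1,0,0;0,1,0;0,0,-1]

def HS : Matrix (Fin 3) (Fin 3) ℂ := !![0,0,1;0,2,0;1,0,0]

def cartan (J : Matrix (Fin 3) (Fin 3) ℂ) (p q r : C3) : ℝ :=
  (-(herm J p q * herm J q r * herm J r p)).arg

def heisPt (z : ℂ) (t : ℝ) : C3 := ![(-(Complex.normSq z) : ℝ) + (t : ℂ) * Complex.I, z, 1]

def realVec (v : Fin 3 → ℝ) : C3 := fun i => (v i : ℂ)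

lemma herm_apply (x y : C3) :
    herm J3 x y = starRingEnd ℂ (y 0) * x 0 + starRingEnd ℂ (y 1) * x 1
      - starRingEnd ℂ (y 2) * x 2 := by
  simp [herm, J3, Matrix.mulVec, dotProduct, Fin.sum_univ_three, Matrix.vecHead,
    Matrix.vecTail]
  ring

lemma herm_conj (x y : C3) : herm J3 y x = starRingEnd ℂ (herm J3 x y) := by
  rw [herm_apply, herm_apply]
  simp only [map_add, map_sub, _root_.map_mul, Complex.conj_conj]
  ring

lemma herm_ne_zero (p q : C3) (hp : p ≠ 0) (hpp : herm J3 p p = 0) (hqq : herm J3 q q = 0)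
    (hpq : ¬ ∃ l : ℂ, q = l • p) : herm J3 p q ≠ 0 := by
  intro h0
  rw [herm_apply] at h0 hpp hqq
  have hp2 : p 2 ≠ 0 := by
    intro h2
    apply hp
    have hsum : starRingEnd ℂ (p 0) * p 0 + starRingEnd ℂ (p 1) * p 1 = 0 := by
      rw [h2] at hpp; simpa using hpp
    have e1 : Complex.normSq (p 0) + Complex.normSq (p 1) = 0 := by
      have e0 : (Complex.normSq (p 0) : ℂ) + (Complex.normSq (p 1) : ℂ) = 0 := by
        rw [Complex.normSq_eq_conj_mul_self, Complex.normSq_eq_conj_mul_self]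
        exact_mod_cast hsum
      exact_mod_cast e0
    have n0 := Complex.normSq_nonneg (p 0)
    have n1 := Complex.normSq_nonneg (p 1)
    have z0 : p 0 = 0 := by rw [← Complex.normSq_eq_zero]; linarith
    have z1 : p 1 = 0 := by rw [← Complex.normSq_eq_zero]; linarith
    funext i; fin_cases i <;> simp [z0, z1, h2]
  have h0c : q 0 * starRingEnd ℂ (p 0) + q 1 * starRingEnd ℂ (p 1)
      - q 2 * starRingEnd ℂ (p 2) = 0 := by
    have := congrArg (starRingEnd ℂ) h0
    simp only [map_add, map_sub, _root_.map_mul, Complex.conj_conj, map_zero] at this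
    linear_combination this
  have hp2c : starRingEnd ℂ (p 2) ≠ 0 := by simpa using hp2
  have e' : q 0 * p 1 - q 1 * p 0 = 0 := by
    have ee : (q 0 * p 1 - q 1 * p 0) * starRingEnd ℂ (q 0 * p 1 - q 1 * p 0) = 0 := by
      simp only [map_sub, _root_.map_mul]
      linear_combination (p 0 * starRingEnd ℂ (p 0) + p 1 * starRingEnd ℂ (p 1)) * hqq
        + (q 2 * starRingEnd ℂ (q 2)) * hpp
        - (q 0 * starRingEnd ℂ (p 0) + q 1 * starRingEnd ℂ (p 1)) * h0
        - (starRingEnd ℂ (q 2) * p 2) * h0c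
    rw [Complex.mul_conj] at ee
    exact_mod_cast Complex.normSq_eq_zero.mp (by exact_mod_cast ee)
  have k0 : q 0 * p 2 = q 2 * p 0 := by
    have h' : (q 0 * p 2 - q 2 * p 0) * starRingEnd ℂ (p 2) = 0 := by
      linear_combination (-(q 0)) * hpp + p 0 * h0c + starRingEnd ℂ (p 1) * e'
    rcases mul_eq_zero.mp h' with h | h
    · exact sub_eq_zero.mp h
    · exact absurd h hp2c
  have k1 : q 1 * p 2 = q 2 * p 1 := by
    have h' : (q 1 * p 2 - q 2 * p 1) * starRingEnd ℂ (p 2) = 0 := by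
      linear_combination (-(q 1)) * hpp + p 1 * h0c - starRingEnd ℂ (p 0) * e'
    rcases mul_eq_zero.mp h' with h | h
    · exact sub_eq_zero.mp h
    · exact absurd h hp2c
  exact hpq ⟨q 2 / p 2, by
    funext i
    fin_cases i <;> simp only [Pi.smul_apply, smul_eq_mul] <;> field_simp
    · simp only [Fin.zero_eta]; linear_combination k0
    · simp only [Fin.mk_one]; linear_combination k1
    · rfl⟩

/-- The Cartan invariant satisfies the cocycle relation modulo 2π. -/
theorem stmt7 (p q r s : C3) (hp : p ≠ 0) (hq : q ≠ 0) (hr : r ≠ 0) (hs : s ≠ 0)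
    (hpp : herm J3 p p = 0) (hqq : herm J3 q q = 0) (hrr : herm J3 r r = 0)
    (hss : herm J3 s s = 0)
    (hpq : ¬ ∃ l : ℂ, q = l • p) (hpr : ¬ ∃ l : ℂ, r = l • p) (hps : ¬ ∃ l : ℂ, s = l • p)
    (hqr : ¬ ∃ l : ℂ, r = l • q) (hqs : ¬ ∃ l : ℂ, s = l • q) (hrs : ¬ ∃ l : ℂ, s = l • r) :
    ∃ k : ℤ, cartan J3 p q r - cartan J3 p q s + cartan J3 p r s - cartan J3 q r s
      = 2 * Real.pi * k := by
  have npq := herm_ne_zero p q hp hpp hqq hpq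
  have npr := herm_ne_zero p r hp hpp hrr hpr
  have nps := herm_ne_zero p s hp hpp hss hps
  have nqr := herm_ne_zero q r hq hqq hrr hqr
  have nqs := herm_ne_zero q s hq hqq hss hqs
  have nrs := herm_ne_zero r s hr hrr hss hrs
  have conj_ne : ∀ x y : C3, herm J3 x y ≠ 0 → herm J3 y x ≠ 0 := by
    intro x y h
    rw [herm_conj x y]
    simpa using h
  have nqp := conj_ne p q npq
  have nrp := conj_ne p r npr
  have nsp := conj_ne p s nps
  have nrq := conj_ne q r nqr
  have nsq := conj_ne q s nqs
  have nsr := conj_ne r s nrs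
  set z1 := -(herm J3 p q * herm J3 q r * herm J3 r p) with hz1
  set z2 := -(herm J3 p q * herm J3 q s * herm J3 s p) with hz2
  set z3 := -(herm J3 p r * herm J3 r s * herm J3 s p) with hz3
  set z4 := -(herm J3 q r * herm J3 r s * herm J3 s q) with hz4
  have nz1 : z1 ≠ 0 := by simp [hz1, npq, nqr, nrp]
  have nz2 : z2 ≠ 0 := by simp [hz2, npq, nqs, nsp]
  have nz3 : z3 ≠ 0 := by simp [hz3, npr, nrs, nsp]
  have nz4 : z4 ≠ 0 := by simp [hz4, nqr, nrs, nsq]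
  set t : ℝ := Complex.normSq (herm J3 p r) / Complex.normSq (herm J3 q s) with ht
  have ht0 : 0 < t := by
    apply div_pos <;> rw [Complex.normSq_pos] <;> assumption
  have key : z1 * z3 = (t : ℂ) * (z2 * z4) := by
    have m1 : herm J3 p r * herm J3 r p = (Complex.normSq (herm J3 p r) : ℂ) := by
      rw [herm_conj p r, Complex.mul_conj]
    have m2 : herm J3 q s * herm J3 s q = (Complex.normSq (herm J3 q s) : ℂ) := by
      rw [herm_conj q s, Complex.mul_conj]
    have hns : (Complex.normSq (herm J3 q s) : ℂ) ≠ 0 := by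
      simpa [Complex.normSq_eq_zero] using nqs
    rw [ht]
    push_cast
    rw [div_mul_eq_mul_div, eq_div_iff hns, hz1, hz2, hz3, hz4]
    rw [← m1, ← m2]
    ring
  have hang : ((z1.arg : Real.Angle) + z3.arg) = ((z2.arg : Real.Angle) + z4.arg) := by
    rw [← Complex.arg_mul_coe_angle nz1 nz3, ← Complex.arg_mul_coe_angle nz2 nz4, key,
      Complex.arg_real_mul _ ht0]
  have hzero : ((z1.arg - z2.arg + z3.arg - z4.arg : ℝ) : Real.Angle) = (0 : ℝ) := by
    have : ((z1.arg - z2.arg + z3.arg - z4.arg : ℝ) : Real.Angle)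
        = ((z1.arg : Real.Angle) + z3.arg) - ((z2.arg : Real.Angle) + z4.arg) := by
      push_cast [Real.Angle.coe_sub, Real.Angle.coe_add]
      abel
    rw [this, hang, sub_self]
    norm_cast
  rw [Real.Angle.angle_eq_iff_two_pi_dvd_sub] at hzero
  obtain ⟨k, hk⟩ := hzero
  refine ⟨k, ?_⟩
  simp only [cartan, ← hz1, ← hz2, ← hz3, ← hz4]
  rw [sub_zero] at hk
  exact hk
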